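/- A commutative ring R is FGFC if and only if the polynomial ring R[x] is FGFC. -/

import Mathlib

open Polynomial

section Basic
variable {R : Type*} [CommRing R]

lemma comap_C_map (I : Ideal R) : (I.map (C : R →+* R[X])).comap C = I := by
  ext x
  simp only [Ideal.mem_comap, Ideal.mem_map_C_iff]
  constructor
  · intro h; simpa using h 0
  · intro hx n
    rcases Nat.eq_zero_or_pos n with rfl | hn
    · simpa using hx
    · simp [Polynomial.coeff_C, Nat.pos_iff_ne_zero.mp hn]

/-- Minimal primes over an ideal containing the kernel of a surjection correspond. -/
lemma mp_surj {S S' : Type*} [CommRing S] [CommRing S'] (π : S →+* S')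
    (hπ : Function.Surjective π) (K : Ideal S) (hker : RingHom.ker π ≤ K) :
    K.minimalPrimes = Ideal.comap π '' (K.map π).minimalPrimes := by
  have h1 : (K.map π).comap π = K := by
    rw [Ideal.comap_map_of_surjective π hπ]
    rw [← RingHom.ker_eq_comap_bot]
    exact sup_eq_left.mpr hker
  conv_lhs => rw [← h1]
  exact Ideal.comap_minimalPrimes_eq_of_surjective hπ _

/-- Minimal primes disjoint from `M` map to minimal primes in the localization. -/
lemma mp_loc {S T : Type*} [CommRing S] [CommRing T] [Algebra S T] (M : Submonoid S)
    [IsLocalization M T] (K : Ideal S) {Q : Ideal S} (hQ : Q ∈ K.minimalPrimes)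
    (hd : Disjoint (M : Set S) (Q : Set S)) :
    Q.map (algebraMap S T) ∈ (K.map (algebraMap S T)).minimalPrimes ∧
      (Q.map (algebraMap S T)).comap (algebraMap S T) = Q := by
  have hQp : Q.IsPrime := hQ.1.1
  have hcm : (Q.map (algebraMap S T)).comap (algebraMap S T) = Q :=
    IsLocalization.comap_map_of_isPrime_disjoint M T hQp hd
  refine ⟨⟨⟨IsLocalization.isPrime_of_isPrime_disjoint M T Q hQp hd, Ideal.map_mono hQ.1.2⟩, ?_⟩, hcm⟩
  rintro P ⟨hPp, hPK⟩ hPQ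
  have h1 : K ≤ P.comap (algebraMap S T) :=
    le_trans (Ideal.le_comap_map) (Ideal.comap_mono hPK)
  have h2 : P.comap (algebraMap S T) ≤ Q := by
    rw [← hcm]; exact Ideal.comap_mono hPQ
  have h3 : P.comap (algebraMap S T) = Q := by
    haveI := hPp
    exact le_antisymm h2 (hQ.2 ⟨Ideal.IsPrime.comap _, h1⟩ h2)
  have h4 : Q.map (algebraMap S T) = P := by
    conv_lhs => rw [← h3]
    exact IsLocalization.map_comap M T P
  exact h4.le

end Basic
open Polynomial

section PolyLoc
variable {R S : Type*} [CommRing R] [CommRing S] [Algebra R S] (M : Submonoid R)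
  [IsLocalization M S]

theorem polyIsLocalization :
    @IsLocalization R[X] _ (M.map (C : R →+* R[X])) S[X] _
      ((mapRingHom (algebraMap R S)).toAlgebra) := by
  letI : Algebra R[X] S[X] := (mapRingHom (algebraMap R S)).toAlgebra
  have halg : (algebraMap R[X] S[X]) = mapRingHom (algebraMap R S) :=
    RingHom.algebraMap_toAlgebra _
  constructor
  constructor
  · rintro ⟨y, m, hm, rfl⟩
    rw [halg]
    simpa using (IsLocalization.map_units S ⟨m, hm⟩).map (C : S →+* S[X])
  · intro z
    obtain ⟨b, hbM, hb⟩ := IsLocalization.integerNormalization_spec M z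
    refine ⟨⟨IsLocalization.integerNormalization M z, ⟨C (b : R), ⟨b, hbM, rfl⟩⟩⟩, ?_⟩
    rw [halg]
    ext n
    simp only [coe_mapRingHom]
    rw [map_C, coeff_mul_C, hb, coeff_smul, Algebra.smul_def, mul_comm]
  · intro f g h
    rw [halg] at h
    have hco : ∀ n, algebraMap R S ((f - g).coeff n) = 0 := by
      intro n
      have := congrArg (fun p => coeff p n) h
      simp only [coe_mapRingHom, coeff_map] at this
      rw [coeff_sub, map_sub, this, sub_self]
    have : ∀ n : ℕ, ∃ c : M, (c : R) * (f - g).coeff n = 0 := by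
      intro n
      obtain ⟨c, hc⟩ := (IsLocalization.map_eq_zero_iff M S _).mp (hco n)
      exact ⟨c, hc⟩
    choose c hc using this
    refine ⟨⟨C (∏ n ∈ (f - g).support, (c n : R)), ⟨_, Submonoid.prod_mem M (fun n _ => (c n).2), rfl⟩⟩, ?_⟩
    have : C (∏ n ∈ (f - g).support, (c n : R)) * (f - g) = 0 := by
      ext n
      simp only [coeff_C_mul, coeff_zero]
      by_cases hn : n ∈ (f - g).support
      · rw [← Finset.prod_erase_mul _ _ hn, mul_assoc, hc n, mul_zero]
      · rw [notMem_support_iff.mp hn, mul_zero]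
    have h2 : C (∏ n ∈ (f - g).support, (c n : R)) * f =
        C (∏ n ∈ (f - g).support, (c n : R)) * g := by
      have := sub_eq_zero.mp (by linear_combination this :
        C (∏ n ∈ (f - g).support, (c n : R)) * f - C (∏ n ∈ (f - g).support, (c n : R)) * g = 0)
      exact this
    simpa using h2
end PolyLoc
open Polynomial

lemma monic_dvd_of_C_mul {D : Type*} [CommRing D] [IsDomain D] {h t : D[X]} (hm : h.Monic)
    {c : D} (hc : c ≠ 0) (hdvd : h ∣ C c * t) : h ∣ t := by
  rw [← modByMonic_eq_zero_iff_dvd hm]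
  by_contra hne
  have h1 : h ∣ C c * (t %ₘ h) := by
    obtain ⟨w, hw⟩ := hdvd
    refine ⟨w - C c * (t /ₘ h), ?_⟩
    have := modByMonic_add_div t h
    calc C c * (t %ₘ h) = C c * t - h * (C c * (t /ₘ h)) := by linear_combination C c * this
      _ = h * (w - C c * (t /ₘ h)) := by rw [hw]; ring
  have h2 : C c * (t %ₘ h) ≠ 0 := mul_ne_zero (by simpa using hc) hne
  have h3 : h.degree ≤ (C c * (t %ₘ h)).degree := degree_le_of_dvd h1 h2
  rw [degree_C_mul hc] at h3
  exact absurd (degree_modByMonic_lt t hm) (not_lt.mpr h3)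

lemma going_down_poly {R : Type*} [CommRing R] {h : R[X]} (hm : h.Monic) (Q : Ideal R[X])
    (hQp : Q.IsPrime) (hQ : h ∈ Q) (q' : Ideal R) (hq'p : q'.IsPrime)
    (hle : q' ≤ Q.comap C) :
    ∃ Q' : Ideal R[X], Q'.IsPrime ∧ h ∈ Q' ∧ Q' ≤ Q ∧ Q'.comap C = q' := by
  classical
  set π : R[X] →+* (R ⧸ q')[X] := mapRingHom (Ideal.Quotient.mk q') with hπdef
  have hπsurj : Function.Surjective π := Polynomial.map_surjective _ Ideal.Quotient.mk_surjective
  have hker : RingHom.ker π = q'.map (C : R →+* R[X]) := by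
    rw [hπdef, Polynomial.ker_mapRingHom, Ideal.mk_ker]
  have hmapCQ : q'.map (C : R →+* R[X]) ≤ Q := Ideal.map_le_of_le_comap hle
  set M : Submonoid R[X] := (q'.primeCompl.map (C : R →+* R[X])) ⊔ Q.primeCompl with hMdef
  set L : Ideal R[X] := Ideal.span {h} ⊔ q'.map (C : R →+* R[X]) with hLdef
  have hdisj : Disjoint (L : Set R[X]) (M : Set R[X]) := by
    rw [Set.disjoint_left]
    rintro x hxL hxM
    obtain ⟨y, hy, z, hz, rfl⟩ := Submonoid.mem_sup.mp hxM
    obtain ⟨u, hu, rfl⟩ := hy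
    rw [SetLike.mem_coe, Submodule.mem_sup] at hxL
    obtain ⟨a, ha, b, hb, hab⟩ := hxL
    obtain ⟨w, rfl⟩ := Ideal.mem_span_singleton'.mp ha
    -- apply π
    have hbker : π b = 0 := by rw [← RingHom.mem_ker, hker]; exact hb
    have hCu : π (C u) = C ((Ideal.Quotient.mk q') u) := by
      rw [hπdef]; simp [coe_mapRingHom]
    have heq : C ((Ideal.Quotient.mk q') u) * π z = π w * π h := by
      have := congrArg π hab
      simp only [map_add, map_mul, hbker, add_zero] at this
      rw [← hCu]
      exact this.symm
    haveI : IsDomain (R ⧸ q') := Ideal.Quotient.isDomain q'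
    have hu0 : (Ideal.Quotient.mk q') u ≠ 0 := by
      simpa [Ideal.Quotient.eq_zero_iff_mem] using hu
    have hdvd : π h ∣ π z := monic_dvd_of_C_mul (hm.map _) hu0 ⟨π w, by
      rw [heq]; ring⟩
    obtain ⟨v, hv⟩ := hdvd
    obtain ⟨v', hv'⟩ := hπsurj v
    have hzq : z ∈ Q := by
      have : z - h * v' ∈ RingHom.ker π := by
        rw [RingHom.mem_ker, map_sub, map_mul, hv, hv']
        ring
      rw [hker] at this
      have := add_mem (hmapCQ this) (Q.mul_mem_right v' hQ)
      simpa using this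
    exact hz hzq
  obtain ⟨p, hpp, hLp, hpM⟩ := Ideal.exists_le_prime_disjoint (I := L) M hdisj
  refine ⟨p, hpp, ?_, ?_, ?_⟩
  · exact hLp (le_sup_left (a := Ideal.span {h}) (Ideal.subset_span rfl))
  · intro x hx
    by_contra hxQ
    exact (Set.disjoint_left.mp hpM) hx (Submonoid.mem_sup_right hxQ)
  · apply le_antisymm
    · intro u hu
      by_contra huq
      exact (Set.disjoint_left.mp hpM) hu (Submonoid.mem_sup_left ⟨u, huq, rfl⟩)
    · intro u hu
      exact hLp (le_sup_right (a := Ideal.span {h}) (Ideal.mem_map_of_mem _ hu))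
open Polynomial

lemma fieldcase {K : Type*} [Field K] {v : K[X]} (hv : v ≠ 0) :
    {P : Ideal K[X] | P.IsPrime ∧ v ∈ P}.Finite := by
  classical
  haveI : Module.Finite K (AdjoinRoot v) :=
    Module.Finite.of_basis (AdjoinRoot.powerBasis hv).basis
  haveI hart : IsArtinianRing (AdjoinRoot v) := IsArtinianRing.of_finite K (AdjoinRoot v)
  have hfin : {I : Ideal (AdjoinRoot v) | I.IsPrime}.Finite :=
    IsArtinianRing.setOfPred_isPrime_finite (AdjoinRoot v)
  have hker : RingHom.ker (AdjoinRoot.mk v) = Ideal.span {v} := by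
    ext g
    rw [RingHom.mem_ker, AdjoinRoot.mk_eq_zero, Ideal.mem_span_singleton]
  have hsub : {P : Ideal K[X] | P.IsPrime ∧ v ∈ P} ⊆
      Ideal.comap (AdjoinRoot.mk v) '' {I : Ideal (AdjoinRoot v) | I.IsPrime} := by
    rintro P ⟨hPp, hvP⟩
    have hkerP : RingHom.ker (AdjoinRoot.mk v) ≤ P := by
      rw [hker]; rwa [Ideal.span_le, Set.singleton_subset_iff]
    haveI := hPp
    refine ⟨P.map (AdjoinRoot.mk v),
      Ideal.map_isPrime_of_surjective (AdjoinRoot.mk_surjective) hkerP, ?_⟩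
    rw [Ideal.comap_map_of_surjective _ (AdjoinRoot.mk_surjective), ← RingHom.ker_eq_comap_bot]
    exact sup_eq_left.mpr hkerP
  exact (hfin.image _).subset hsub

def IsFGFC (R : Type*) [CommRing R] : Prop :=
  ∀ I : Ideal R, I.FG → I.minimalPrimes.Finite

section Core
variable {R : Type*} [CommRing R]

lemma core0 (hF : IsFGFC R) {h : R[X]} (hm : h.Monic) :
    (Ideal.span {h} : Ideal R[X]).minimalPrimes.Finite := by
  classical
  have hminR : (minimalPrimes R).Finite := hF ⊥ ⟨∅, by simp⟩
  -- the target sets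
  let T : Ideal R → Set (Ideal R[X]) := fun q =>
    Ideal.comap (mapRingHom (Ideal.Quotient.mk q)) ''
      (Ideal.comap (mapRingHom (algebraMap (R ⧸ q) (FractionRing (R ⧸ q)))) ''
        {P : Ideal (FractionRing (R ⧸ q))[X] | P.IsPrime ∧
          (h.map (Ideal.Quotient.mk q)).map (algebraMap (R ⧸ q) (FractionRing (R ⧸ q))) ∈ P})
  have hTfin : ∀ q ∈ minimalPrimes R, (T q).Finite := by
    intro q hq
    haveI hqp : q.IsPrime := hq.1.1
    haveI : IsDomain (R ⧸ q) := Ideal.Quotient.isDomain q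
    have hv : ((h.map (Ideal.Quotient.mk q)).map
        (algebraMap (R ⧸ q) (FractionRing (R ⧸ q)))) ≠ 0 :=
      ((hm.map _).map _).ne_zero
    exact (((fieldcase hv).image _).image _)
  refine ((hminR.biUnion hTfin).subset ?_)
  rintro Q hQ
  haveI hQp : Q.IsPrime := hQ.1.1
  have hhQ : h ∈ Q := hQ.1.2 (Ideal.subset_span rfl)
  set q : Ideal R := Q.comap C with hqdef
  haveI hqp : q.IsPrime := Ideal.IsPrime.comap _
  -- q is a minimal prime of R
  have hqmin : q ∈ minimalPrimes R := by
    obtain ⟨q', hq', hq'le⟩ := Ideal.exists_minimalPrimes_le (I := (⊥ : Ideal R)) (J := q) bot_le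
    haveI := hq'.1.1
    obtain ⟨Q', hQ'p, hhQ', hQ'le, hQ'c⟩ := going_down_poly hm Q hQp hhQ q' hq'.1.1 hq'le
    have : Q ≤ Q' := hQ.2 ⟨hQ'p, by rwa [Ideal.span_le, Set.singleton_subset_iff]⟩ hQ'le
    have hQQ' : Q' = Q := le_antisymm hQ'le this
    have : q = q' := by rw [hqdef, ← hQQ', hQ'c]
    rw [this]; exact hq'
  refine Set.mem_biUnion hqmin ?_
  haveI : IsDomain (R ⧸ q) := Ideal.Quotient.isDomain q
  set π : R[X] →+* (R ⧸ q)[X] := mapRingHom (Ideal.Quotient.mk q) with hπdef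
  have hπsurj : Function.Surjective π := Polynomial.map_surjective _ Ideal.Quotient.mk_surjective
  have hker : RingHom.ker π = q.map (C : R →+* R[X]) := by
    rw [hπdef, Polynomial.ker_mapRingHom, Ideal.mk_ker]
  have hkerQ : RingHom.ker π ≤ Q := by
    rw [hker]; exact Ideal.map_le_of_le_comap le_rfl
  set Q1 : Ideal (R ⧸ q)[X] := Q.map π with hQ1def
  have hcomapQ1 : Q1.comap π = Q := by
    rw [hQ1def, Ideal.comap_map_of_surjective π hπsurj, ← RingHom.ker_eq_comap_bot]
    exact sup_eq_left.mpr hkerQ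
  haveI hQ1p : Q1.IsPrime := Ideal.map_isPrime_of_surjective hπsurj hkerQ
  have hπh : π h = h.map (Ideal.Quotient.mk q) := by rw [hπdef]; rfl
  have hπhQ1 : h.map (Ideal.Quotient.mk q) ∈ Q1 := by
    rw [← hπh]; exact Ideal.mem_map_of_mem π hhQ
  have hQ1min : Q1 ∈ (Ideal.span {h.map (Ideal.Quotient.mk q)} :
      Ideal (R ⧸ q)[X]).minimalPrimes := by
    constructor
    · exact ⟨hQ1p, by rwa [Ideal.span_le, Set.singleton_subset_iff]⟩
    · rintro P ⟨hPp, hPh⟩ hPQ1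
      haveI := hPp
      have h1 : Ideal.span {h} ≤ P.comap π := by
        rw [Ideal.span_le, Set.singleton_subset_iff]
        refine Ideal.mem_comap.mpr ?_
        rw [hπh]
        exact hPh (Ideal.subset_span rfl)
      have h2 : P.comap π ≤ Q := by rw [← hcomapQ1]; exact Ideal.comap_mono hPQ1
      have h3 : Q ≤ P.comap π := hQ.2 ⟨Ideal.IsPrime.comap _, h1⟩ h2
      calc Q1 = Q.map π := hQ1def
        _ ≤ (P.comap π).map π := Ideal.map_mono h3
        _ ≤ P := Ideal.map_comap_le
  have hcomapCQ1 : Q1.comap (C : (R ⧸ q) →+* (R ⧸ q)[X]) = ⊥ := by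
    ext d
    obtain ⟨r, rfl⟩ := Ideal.Quotient.mk_surjective d
    simp only [Ideal.mem_comap, Submodule.mem_bot]
    constructor
    · intro hd
      have hπC : π (C r) = C (Ideal.Quotient.mk q r) := by
        rw [hπdef]; simp [coe_mapRingHom]
      have hCr : C r ∈ Q := by
        rw [← hcomapQ1]
        exact Ideal.mem_comap.mpr (by rwa [hπC])
      exact Ideal.Quotient.eq_zero_iff_mem.mpr hCr
    · intro hd; rw [hd, map_zero]; exact Submodule.zero_mem Q1
  letI : Algebra (R ⧸ q)[X] (FractionRing (R ⧸ q))[X] :=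
    (mapRingHom (algebraMap (R ⧸ q) (FractionRing (R ⧸ q)))).toAlgebra
  haveI hloc : IsLocalization ((nonZeroDivisors (R ⧸ q)).map
      (C : (R ⧸ q) →+* (R ⧸ q)[X])) (FractionRing (R ⧸ q))[X] :=
    polyIsLocalization (nonZeroDivisors (R ⧸ q))
  have halg : algebraMap (R ⧸ q)[X] (FractionRing (R ⧸ q))[X]
      = mapRingHom (algebraMap (R ⧸ q) (FractionRing (R ⧸ q))) :=
    RingHom.algebraMap_toAlgebra _
  have hdisj : Disjoint (((nonZeroDivisors (R ⧸ q)).map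
      (C : (R ⧸ q) →+* (R ⧸ q)[X]) : Submonoid (R ⧸ q)[X]) : Set (R ⧸ q)[X])
      (Q1 : Set (R ⧸ q)[X]) := by
    rw [Set.disjoint_left]
    rintro x ⟨d, hd, rfl⟩ hx
    have hmem : d ∈ Q1.comap (C : (R ⧸ q) →+* (R ⧸ q)[X]) := hx
    rw [hcomapCQ1] at hmem
    exact nonZeroDivisors.ne_zero hd (by simpa using hmem)
  obtain ⟨hQ2min, hQ2c⟩ := mp_loc (T := (FractionRing (R ⧸ q))[X])
    ((nonZeroDivisors (R ⧸ q)).map (C : (R ⧸ q) →+* (R ⧸ q)[X]))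
    (Ideal.span {h.map (Ideal.Quotient.mk q)}) hQ1min hdisj
  have hvQ2 : (h.map (Ideal.Quotient.mk q)).map
      (algebraMap (R ⧸ q) (FractionRing (R ⧸ q)))
      ∈ Q1.map (algebraMap (R ⧸ q)[X] (FractionRing (R ⧸ q))[X]) := by
    have : (h.map (Ideal.Quotient.mk q)).map (algebraMap (R ⧸ q) (FractionRing (R ⧸ q)))
        = algebraMap (R ⧸ q)[X] (FractionRing (R ⧸ q))[X] (h.map (Ideal.Quotient.mk q)) := by
      rw [halg]; rfl
    rw [this]
    exact Ideal.mem_map_of_mem _ hπhQ1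
  refine ⟨Ideal.comap (mapRingHom (algebraMap (R ⧸ q) (FractionRing (R ⧸ q))))
      (Q1.map (algebraMap (R ⧸ q)[X] (FractionRing (R ⧸ q))[X])),
    ⟨Q1.map (algebraMap (R ⧸ q)[X] (FractionRing (R ⧸ q))[X]),
      ⟨hQ2min.1.1, hvQ2⟩, rfl⟩, ?_⟩
  have hc1 : Ideal.comap (mapRingHom (algebraMap (R ⧸ q) (FractionRing (R ⧸ q))))
      (Q1.map (algebraMap (R ⧸ q)[X] (FractionRing (R ⧸ q))[X])) = Q1 := by
    rw [← halg]; exact hQ2c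
  rw [hc1]
  exact hcomapQ1
end Core


section Transport
variable {R : Type*} [CommRing R]

lemma mem_mp_map_C {I : Ideal R} {Q : Ideal R[X]}
    (hQ : Q ∈ (I.map (C : R →+* R[X])).minimalPrimes) :
    Q.comap (C : R →+* R[X]) ∈ I.minimalPrimes ∧
      (Q.comap (C : R →+* R[X])).map (C : R →+* R[X]) = Q := by
  haveI hQp : Q.IsPrime := hQ.1.1
  set q : Ideal R := Q.comap C with hq
  haveI hqp : q.IsPrime := Ideal.IsPrime.comap _
  have hIq : I ≤ q := le_trans Ideal.le_comap_map (Ideal.comap_mono hQ.1.2)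
  have h1 : q.map (C : R →+* R[X]) ≤ Q := Ideal.map_le_of_le_comap le_rfl
  have h2 : Q ≤ q.map (C : R →+* R[X]) :=
    hQ.2 ⟨(by haveI := hqp; exact Ideal.isPrime_map_C_of_isPrime), Ideal.map_mono hIq⟩ h1
  have heq : q.map (C : R →+* R[X]) = Q := le_antisymm h1 h2
  refine ⟨⟨⟨hqp, hIq⟩, ?_⟩, heq⟩
  rintro p ⟨hpp, hIp⟩ hpq
  have h3 : p.map (C : R →+* R[X]) ≤ Q := by rw [← heq]; exact Ideal.map_mono hpq
  have h4 : Q ≤ p.map (C : R →+* R[X]) :=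
    hQ.2 ⟨(by haveI := hpp; exact Ideal.isPrime_map_C_of_isPrime), Ideal.map_mono hIp⟩ h3
  calc q = Q.comap C := hq
    _ ≤ (p.map (C : R →+* R[X])).comap C := Ideal.comap_mono h4
    _ = p := comap_C_map p

lemma baseA (hF : IsFGFC R) {I : Ideal R} (hfg : I.FG) :
    (I.map (C : R →+* R[X])).minimalPrimes.Finite := by
  refine ((hF I hfg).image (fun p => p.map (C : R →+* R[X]))).subset ?_
  intro Q hQ
  obtain ⟨h1, h2⟩ := mem_mp_map_C hQ
  exact ⟨_, h1, h2⟩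

lemma locFGFC (hF : IsFGFC R) (M : Submonoid R) (S : Type*) [CommRing S] [Algebra R S]
    [IsLocalization M S] : IsFGFC S := by
  intro I' hI'
  obtain ⟨s, hs⟩ := hI'
  have hsur : ∀ x : S, ∃ p : R × M, x * algebraMap R S p.2 = algebraMap R S p.1 :=
    fun x => IsLocalization.surj M x
  choose p hp using hsur
  set I0 : Ideal R := Ideal.span ((fun x => (p x).1) '' ↑s) with hI0
  have hI0fg : I0.FG := Submodule.fg_span (s.finite_toSet.image _)
  have hmap : I0.map (algebraMap R S) = I' := by
    apply le_antisymm
    · rw [Ideal.map_le_iff_le_comap, hI0, Ideal.span_le]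
      rintro _ ⟨x, hx, rfl⟩
      have hx' : x ∈ I' := by rw [← hs]; exact Ideal.subset_span hx
      have : algebraMap R S (p x).1 ∈ I' := by
        rw [← hp x]; exact Ideal.mul_mem_right _ _ hx'
      exact this
    · rw [← hs, Ideal.span_le]
      intro x hx
      have h1 : algebraMap R S (p x).1 ∈ I0.map (algebraMap R S) :=
        Ideal.mem_map_of_mem _ (Ideal.subset_span ⟨x, hx, rfl⟩)
      rw [← hp x] at h1
      obtain ⟨u, hu⟩ := IsLocalization.map_units S (p x).2
      have : x = x * algebraMap R S (p x).2 * ↑u⁻¹ := by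
        rw [← hu, Units.mul_inv_cancel_right]
      rw [this]
      exact Ideal.mul_mem_right _ _ h1
  rw [← hmap]
  refine ((hF I0 hI0fg).image (fun q => q.map (algebraMap R S))).subset ?_
  intro Q' hQ'
  haveI hQ'p : Q'.IsPrime := hQ'.1.1
  set Q0 : Ideal R := Q'.comap (algebraMap R S) with hQ0
  haveI hQ0p : Q0.IsPrime := Ideal.IsPrime.comap _
  have hd0 : Disjoint (M : Set R) (Q0 : Set R) := by
    rw [Set.disjoint_left]
    intro m hm hmQ
    exact (hQ'p.ne_top) (Q'.eq_top_of_isUnit_mem hmQ (IsLocalization.map_units S ⟨m, hm⟩))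
  have hI0Q0 : I0 ≤ Q0 := le_trans Ideal.le_comap_map (Ideal.comap_mono hQ'.1.2)
  have hmc : Q0.map (algebraMap R S) = Q' := IsLocalization.map_comap M S Q'
  refine ⟨Q0, ⟨⟨hQ0p, hI0Q0⟩, ?_⟩, hmc⟩
  rintro p' ⟨hp'p, hIp'⟩ hp'Q0
  have hd' : Disjoint (M : Set R) (p' : Set R) :=
    Set.disjoint_of_subset_right (by exact_mod_cast hp'Q0) hd0
  have hmapp' : (p'.map (algebraMap R S)).IsPrime :=
    IsLocalization.isPrime_of_isPrime_disjoint M S p' hp'p hd'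
  have h5 : p'.map (algebraMap R S) ≤ Q' := by
    rw [← hmc]; exact Ideal.map_mono hp'Q0
  have h6 : Q' ≤ p'.map (algebraMap R S) :=
    hQ'.2 ⟨hmapp', Ideal.map_mono hIp'⟩ h5
  have h7 : Q' = p'.map (algebraMap R S) := le_antisymm h6 h5
  rw [hQ0, h7, (show Ideal.comap (algebraMap R S) (p'.map (algebraMap R S)) = p' from
    IsLocalization.comap_map_of_isPrime_disjoint M S hp'p hd')]

lemma quotFGFC (hF : IsFGFC R) (I : Ideal R) (hfg : I.FG) : IsFGFC (R ⧸ I) := by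
  intro J hJ
  obtain ⟨s, hs⟩ := hJ
  have hsur : ∀ x : R ⧸ I, ∃ a : R, Ideal.Quotient.mk I a = x :=
    fun x => Ideal.Quotient.mk_surjective x
  choose a ha using hsur
  set J0 : Ideal R := I ⊔ Ideal.span (a '' ↑s) with hJ0
  have hJ0fg : J0.FG := Submodule.FG.sup hfg (Submodule.fg_span (s.finite_toSet.image _))
  have hkerle : RingHom.ker (Ideal.Quotient.mk I) ≤ J0 := by
    rw [Ideal.mk_ker]; exact le_sup_left
  have hmap : J0.map (Ideal.Quotient.mk I) = J := by
    rw [hJ0, Ideal.map_sup, Ideal.map_quotient_self, bot_sup_eq, Ideal.map_span, ← hs]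
    congr 1
    ext x
    constructor
    · rintro ⟨_, ⟨y, hy, rfl⟩, rfl⟩
      rw [ha y]; exact hy
    · intro hx
      exact ⟨a x, ⟨x, hx, rfl⟩, ha x⟩
  have hcorr := mp_surj (Ideal.Quotient.mk I) Ideal.Quotient.mk_surjective J0 hkerle
  rw [hmap] at hcorr
  have hfin : J0.minimalPrimes.Finite := hF J0 hJ0fg
  rw [hcorr] at hfin
  exact hfin.of_finite_image
    (Set.injOn_of_injective (Ideal.comap_injective_of_surjective _ Ideal.Quotient.mk_surjective))
end Transport

section Main
universe u

lemma baseB {T : Type u} [CommRing T] (hF : IsFGFC T) {g1 : T[X]} (hg1 : g1.Monic)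
    (cs : List T[X]) (hcs : ∀ f ∈ cs, f.natDegree = 0) :
    (Ideal.span {f | f ∈ g1 :: cs} : Ideal T[X]).minimalPrimes.Finite := by
  classical
  set I2 : Ideal T := Ideal.span ((fun f : T[X] => f.coeff 0) '' {f | f ∈ cs}) with hI2
  have hI2fg : I2.FG := Submodule.fg_span ((cs.finite_toSet).image _)
  set π2 : T[X] →+* (T ⧸ I2)[X] := mapRingHom (Ideal.Quotient.mk I2) with hπ2
  have hπ2surj : Function.Surjective π2 :=
    Polynomial.map_surjective _ Ideal.Quotient.mk_surjective
  have hker2 : RingHom.ker π2 = I2.map (C : T →+* T[X]) := by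
    rw [hπ2, Polynomial.ker_mapRingHom, Ideal.mk_ker]
  have hspan : (Ideal.span {f | f ∈ g1 :: cs} : Ideal T[X]) =
      Ideal.span {g1} ⊔ I2.map (C : T →+* T[X]) := by
    apply le_antisymm
    · rw [Ideal.span_le]
      rintro f hf
      rcases List.mem_cons.mp hf with rfl | hf
      · exact Ideal.mem_sup_left (Ideal.subset_span rfl)
      · have hfc : f = C (f.coeff 0) := eq_C_of_natDegree_eq_zero (hcs f hf)
        rw [hfc]
        exact Ideal.mem_sup_right (Ideal.mem_map_of_mem _ (Ideal.subset_span ⟨f, hf, rfl⟩))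
    · refine sup_le ?_ ?_
      · rw [Ideal.span_le, Set.singleton_subset_iff]
        exact Ideal.subset_span (List.mem_cons_self (a := g1) (l := cs))
      · rw [Ideal.map_le_iff_le_comap, hI2, Ideal.span_le]
        rintro _ ⟨f, hf, rfl⟩
        refine Ideal.mem_comap.mpr ?_
        have hfc : C (f.coeff 0) = f := (eq_C_of_natDegree_eq_zero (hcs f hf)).symm
        rw [hfc]
        exact Ideal.subset_span (List.mem_cons_of_mem _ hf)
  have hkerle : RingHom.ker π2 ≤ Ideal.span {f | f ∈ g1 :: cs} := by
    rw [hker2, hspan]; exact le_sup_right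
  have hcorr := mp_surj π2 hπ2surj _ hkerle
  have himg : (Ideal.span {f | f ∈ g1 :: cs} : Ideal T[X]).map π2 = Ideal.span {π2 g1} := by
    rw [hspan, Ideal.map_sup, Ideal.map_span, Set.image_singleton]
    have hbot : (I2.map (C : T →+* T[X])).map π2 = ⊥ := by
      rw [← hker2, eq_bot_iff, Ideal.map_le_iff_le_comap]
      intro x hx
      simpa using RingHom.mem_ker.mp hx
    rw [hbot, sup_bot_eq]
  rw [hcorr, himg]
  haveI hTq : IsFGFC (T ⧸ I2) := quotFGFC hF I2 hI2fg
  have hmonic : (π2 g1).Monic := hg1.map _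
  exact (core0 hTq hmonic).image _

lemma baseAList {R : Type u} [CommRing R] (hF : IsFGFC R) (L : List R[X])
    (hall : ∀ f ∈ L, f.natDegree = 0) :
    (Ideal.span {f | f ∈ L} : Ideal R[X]).minimalPrimes.Finite := by
  have hset : (Ideal.span {f | f ∈ L} : Ideal R[X]) =
      (Ideal.span ((fun f : R[X] => f.coeff 0) '' {f | f ∈ L})).map (C : R →+* R[X]) := by
    rw [Ideal.map_span]
    congr 1
    ext f
    constructor
    · intro hf
      exact ⟨f.coeff 0, ⟨f, hf, rfl⟩, (eq_C_of_natDegree_eq_zero (hall f hf)).symm⟩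
    · rintro ⟨_, ⟨f', hf', rfl⟩, rfl⟩
      show C (f'.coeff 0) ∈ {f | f ∈ L}
      rw [← eq_C_of_natDegree_eq_zero (hall f' hf')]
      exact hf'
  rw [hset]
  exact baseA hF (Submodule.fg_span ((L.finite_toSet).image _))

theorem key (μ : ℕ) : ∀ (R : Type u) [CommRing R], IsFGFC R → ∀ L : List R[X],
    (L.map Polynomial.natDegree).sum ≤ μ →
    (Ideal.span {f | f ∈ L} : Ideal R[X]).minimalPrimes.Finite := by
  induction μ with
  | zero =>
    intro R _ hF L hsum
    refine baseAList hF L ?_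
    intro f hf
    have := List.single_le_sum (l := L.map Polynomial.natDegree) (fun _ _ => Nat.zero_le _)
      f.natDegree (List.mem_map_of_mem hf)
    omega
  | succ μ ih =>
    intro R _ hF L hsum
    classical
    by_cases hall : ∀ f ∈ L, f.natDegree = 0
    · exact baseAList hF L hall
    push_neg at hall
    obtain ⟨g0, hg0L, hg0⟩ := hall
    have hex : ∃ n, n ≠ 0 ∧ ∃ f, f ∈ L ∧ f.natDegree = n := ⟨g0.natDegree, hg0, g0, hg0L, rfl⟩
    set e := Nat.find hex with he
    obtain ⟨he0, g, hgL, hge⟩ := Nat.find_spec hex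
    rw [← he] at he0 hge
    have hemin : ∀ f ∈ L, f.natDegree ≠ 0 → e ≤ f.natDegree := by
      intro f hf hf0
      by_contra hlt
      exact (Nat.find_min hex (lt_of_not_ge hlt)) ⟨hf0, f, hf, rfl⟩
    have he1 : 1 ≤ e := Nat.one_le_iff_ne_zero.mpr he0
    set b := g.leadingCoeff with hb
    set J : Ideal R[X] := Ideal.span {f | f ∈ L} with hJ
    have hperm : L.Perm (g :: L.erase g) := List.perm_cons_erase hgL
    have hsum_split : (L.map Polynomial.natDegree).sum
        = e + ((L.erase g).map Polynomial.natDegree).sum := by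
      rw [(hperm.map Polynomial.natDegree).sum_eq]
      simp [hge]
    have hgJ : g ∈ J := by rw [hJ]; exact Ideal.subset_span hgL
    have hS1 : {Q | Q ∈ J.minimalPrimes ∧ C b ∈ Q}.Finite := by
      set L1 : List R[X] := g.eraseLead :: C b :: L.erase g with hL1
      have hsum1 : (L1.map Polynomial.natDegree).sum ≤ μ := by
        have h1 : g.eraseLead.natDegree ≤ e - 1 := by
          have h2 := Polynomial.eraseLead_natDegree_le g
          rwa [hge] at h2
        have h3 : (L1.map Polynomial.natDegree).sum =
            g.eraseLead.natDegree + (0 + ((L.erase g).map Polynomial.natDegree).sum) := by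
          simp [hL1]
        omega
      have hsub1 : {Q | Q ∈ J.minimalPrimes ∧ C b ∈ Q} ⊆
          (Ideal.span {f | f ∈ L1} : Ideal R[X]).minimalPrimes := by
        rintro Q ⟨hQ, hbQ⟩
        haveI := hQ.1.1
        have hJQ : J ≤ Q := hQ.1.2
        have hge' : g - C b * X ^ e = g.eraseLead := by
          rw [hb, ← hge]; exact Polynomial.self_sub_C_mul_X_pow g
        have hL1Q : Ideal.span {f | f ∈ L1} ≤ Q := by
          rw [Ideal.span_le]
          rintro f hf
          rcases List.mem_cons.mp hf with rfl | hf2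
          · rw [← hge']
            exact Submodule.sub_mem _ (hJQ hgJ) (Ideal.mul_mem_right _ _ hbQ)
          rcases List.mem_cons.mp hf2 with rfl | hf3
          · exact hbQ
          · exact hJQ (Ideal.subset_span (List.mem_of_mem_erase hf3))
        constructor
        · exact ⟨hQ.1.1, hL1Q⟩
        · rintro P ⟨hPp, hPL1⟩ hPQ
          have hbP : C b ∈ P := hPL1 (Ideal.subset_span (List.mem_cons_of_mem _
            (List.mem_cons_self)))
          have hJP : J ≤ P := by
            rw [hJ, Ideal.span_le]
            intro f hf
            by_cases hfg : f = g
            · subst hfg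
              have h2 : f.eraseLead ∈ P := hPL1 (Ideal.subset_span (List.mem_cons_self))
              have h4 : f = f.eraseLead + C b * X ^ e := by
                rw [← hge']; ring
              rw [h4]
              exact Submodule.add_mem _ h2 (Ideal.mul_mem_right _ _ hbP)
            · have hf' : f ∈ L.erase g := (List.mem_erase_of_ne hfg).mpr hf
              exact hPL1 (Ideal.subset_span (List.mem_cons_of_mem _
                (List.mem_cons_of_mem _ hf')))
          exact hQ.2 ⟨hPp, hJP⟩ hPQ
      exact (ih R hF L1 hsum1).subset hsub1
    have hS2 : {Q | Q ∈ J.minimalPrimes ∧ C b ∉ Q}.Finite := by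
      letI : Algebra R[X] (Localization.Away b)[X] :=
        (mapRingHom (algebraMap R (Localization.Away b))).toAlgebra
      haveI hloc : IsLocalization ((Submonoid.powers b).map (C : R →+* R[X]))
          (Localization.Away b)[X] := polyIsLocalization (Submonoid.powers b)
      have halg : algebraMap R[X] (Localization.Away b)[X]
          = mapRingHom (algebraMap R (Localization.Away b)) := RingHom.algebraMap_toAlgebra _
      have hsub2 : {Q | Q ∈ J.minimalPrimes ∧ C b ∉ Q} ⊆
          Ideal.comap (algebraMap R[X] (Localization.Away b)[X]) ''
            ((J.map (algebraMap R[X] (Localization.Away b)[X])).minimalPrimes) := by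
        rintro Q ⟨hQ, hbQ⟩
        haveI := hQ.1.1
        have hd : Disjoint (((Submonoid.powers b).map (C : R →+* R[X]) : Submonoid R[X]) :
            Set R[X]) (Q : Set R[X]) := by
          rw [Set.disjoint_left]
          rintro x ⟨m, ⟨n, rfl⟩, rfl⟩ hx
          have hpow : (C b : R[X]) ^ n ∈ Q := by
            have : (C (b ^ n) : R[X]) ∈ Q := hx
            rwa [map_pow] at this
          rcases Nat.eq_zero_or_pos n with rfl | hn
          · rw [pow_zero] at hpow
            exact hQ.1.1.ne_top (Ideal.eq_top_iff_one Q |>.mpr hpow)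
          · exact hbQ (hQ.1.1.mem_of_pow_mem n hpow)
        obtain ⟨hmin, hcom⟩ := mp_loc (T := (Localization.Away b)[X])
          ((Submonoid.powers b).map (C : R →+* R[X])) J hQ hd
        exact ⟨Q.map (algebraMap R[X] (Localization.Away b)[X]), hmin, hcom⟩
      refine (Set.Finite.image _ ?_).subset hsub2
      haveI hFT : IsFGFC (Localization.Away b) := locFGFC hF (Submonoid.powers b) _
      rcases subsingleton_or_nontrivial (Localization.Away b) with hTs | hTn
      · refine Set.finite_empty.subset ?_
        rintro P hP
        have h1 : (1 : (Localization.Away b)[X]) = 0 := Subsingleton.elim _ _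
        exact absurd (Ideal.eq_top_iff_one P |>.mpr (h1 ▸ P.zero_mem)) hP.1.1.ne_top
      · have hβ : IsUnit (algebraMap R (Localization.Away b) b) :=
          IsLocalization.Away.algebraMap_isUnit b
        set u := hβ.unit with hu
        set ψ : R[X] →+* (Localization.Away b)[X] :=
          mapRingHom (algebraMap R (Localization.Away b)) with hψ
        set g1 : (Localization.Away b)[X] := C (↑u⁻¹ : Localization.Away b) * ψ g with hg1def
        have hψg_coeff : (ψ g).coeff e = algebraMap R (Localization.Away b) b := by
          rw [hψ]
          simp only [coe_mapRingHom, coeff_map]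
          rw [← hge, hb]
          rfl
        have hψg_deg : (ψ g).natDegree ≤ e := by
          rw [hψ]
          simpa [hge] using natDegree_map_le (p := g) (f := algebraMap R (Localization.Away b))
        have hg1coeff : g1.coeff e = 1 := by
          rw [hg1def, coeff_C_mul, hψg_coeff, ← IsUnit.unit_spec hβ, Units.inv_mul]
        have hg1deg : g1.natDegree ≤ e := le_trans (natDegree_C_mul_le _ _) hψg_deg
        have hg1monic : g1.Monic := monic_of_natDegree_le_of_coeff_eq_one e hg1deg hg1coeff
        have hg1nd : g1.natDegree = e :=
          le_antisymm hg1deg (le_natDegree_of_ne_zero (by rw [hg1coeff]; exact one_ne_zero))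
        set L2 : List (Localization.Away b)[X] :=
          g1 :: (L.erase g).map (fun f => ψ f %ₘ g1) with hL2
        have hmapspan : J.map (algebraMap R[X] (Localization.Away b)[X]) =
            Ideal.span {f | f ∈ L2} := by
          rw [hJ, halg, Ideal.map_span]
          apply le_antisymm
          · rw [Ideal.span_le]
            rintro _ ⟨f, hf, rfl⟩
            show ψ f ∈ Ideal.span {f | f ∈ L2}
            by_cases hfg : f = g
            · subst hfg
              have hval : ψ f = C (↑u : Localization.Away b) * g1 := by
                rw [hg1def, ← mul_assoc, ← C_mul, Units.mul_inv, C_1, one_mul]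
              rw [hval]
              exact Ideal.mul_mem_left _ _ (Ideal.subset_span (List.mem_cons_self))
            · have hf' : f ∈ L.erase g := (List.mem_erase_of_ne hfg).mpr hf
              have hdec : ψ f %ₘ g1 + g1 * (ψ f /ₘ g1) = ψ f := modByMonic_add_div _ _
              rw [← hdec]
              refine Submodule.add_mem _ ?_ ?_
              · exact Ideal.subset_span (List.mem_cons_of_mem _ (List.mem_map_of_mem hf'))
              · exact Ideal.mul_mem_right _ _ (Ideal.subset_span (List.mem_cons_self))
          · rw [Ideal.span_le]
            rintro f hf
            rcases List.mem_cons.mp hf with rfl | hf2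
            · rw [hg1def]
              exact Ideal.mul_mem_left _ _ (Ideal.subset_span ⟨g, hgL, rfl⟩)
            · obtain ⟨f0, hf0, rfl⟩ := List.mem_map.mp hf2
              have hdec : ψ f0 %ₘ g1 = ψ f0 - g1 * (ψ f0 /ₘ g1) :=
                eq_sub_of_add_eq (modByMonic_add_div (ψ f0) g1)
              rw [hdec]
              refine Submodule.sub_mem _ ?_ ?_
              · exact Ideal.subset_span ⟨f0, List.mem_of_mem_erase hf0, rfl⟩
              · refine Ideal.mul_mem_right _ _ ?_
                rw [hg1def]
                exact Ideal.mul_mem_left _ _ (Ideal.subset_span ⟨g, hgL, rfl⟩)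
        rw [hmapspan]
        have hg1degW : g1.degree = (e : WithBot ℕ) := by
          rw [← hg1nd]
          exact degree_eq_natDegree hg1monic.ne_zero
        have hconst_bound : ∀ x ∈ L.erase g, x.natDegree = 0 →
            (ψ x %ₘ g1).natDegree = 0 := by
          intro x _ hx0
          have hψx : (ψ x).natDegree = 0 := by
            have h := natDegree_map_le (p := x) (f := algebraMap R (Localization.Away b))
            simp only [hψ, coe_mapRingHom]
            omega
          have hdeg : (ψ x).degree < g1.degree := by
            rw [hg1degW]
            calc (ψ x).degree ≤ ((ψ x).natDegree : WithBot ℕ) := degree_le_natDegree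
              _ = (0 : ℕ) := by rw [hψx]
              _ < (e : WithBot ℕ) := by exact_mod_cast he1
          rw [(modByMonic_eq_self_iff hg1monic).mpr hdeg]
          exact hψx
        have hnc_bound : ∀ x, (ψ x %ₘ g1).natDegree ≤ e - 1 := by
          intro x
          rcases eq_or_ne (ψ x %ₘ g1) 0 with h0 | h0
          · rw [h0]; simp
          · have hlt : (ψ x %ₘ g1).degree < g1.degree := degree_modByMonic_lt (ψ x) hg1monic
            have h6 := natDegree_lt_natDegree h0 hlt
            rw [hg1nd] at h6
            omega
        by_cases hallc : ∀ f ∈ L.erase g, f.natDegree = 0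
        · refine baseB hFT hg1monic _ ?_
          intro f hf
          obtain ⟨f0, hf0, rfl⟩ := List.mem_map.mp hf
          exact hconst_bound f0 hf0 (hallc f0 hf0)
        · push_neg at hallc
          obtain ⟨f', hf'mem, hf'0⟩ := hallc
          refine ih (Localization.Away b) hFT L2 ?_
          -- sum bound
          have hperm2 : (L.erase g).Perm (f' :: (L.erase g).erase f') :=
            List.perm_cons_erase hf'mem
          have hbound_all : ∀ x ∈ L.erase g, (ψ x %ₘ g1).natDegree ≤ x.natDegree := by
            intro x hx
            by_cases hx0 : x.natDegree = 0
            · rw [hconst_bound x hx hx0, hx0]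
            · have h6 := hnc_bound x
              have h7 := hemin x (List.mem_of_mem_erase hx) hx0
              omega
          have hsum2 : ((L.erase g).map (fun f => (ψ f %ₘ g1).natDegree)).sum
              ≤ (e - 1) + (((L.erase g).erase f').map Polynomial.natDegree).sum := by
            rw [(hperm2.map (fun f => (ψ f %ₘ g1).natDegree)).sum_eq]
            simp only [List.map_cons, List.sum_cons]
            have h8 : ∀ x ∈ (L.erase g).erase f', (ψ x %ₘ g1).natDegree ≤ x.natDegree :=
              fun x hx => hbound_all x (List.mem_of_mem_erase hx)
            have h9 := List.sum_le_sum h8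
            have h10 := hnc_bound f'
            omega
          have hsum3 : ((L.erase g).map Polynomial.natDegree).sum
              = f'.natDegree + (((L.erase g).erase f').map Polynomial.natDegree).sum := by
            rw [(hperm2.map Polynomial.natDegree).sum_eq]
            simp
          have hL2sum : (L2.map Polynomial.natDegree).sum
              = e + ((L.erase g).map (fun f => (ψ f %ₘ g1).natDegree)).sum := by
            rw [hL2]
            simp only [List.map_cons, List.sum_cons, List.map_map, hg1nd]
            rfl
          have hf'e : e ≤ f'.natDegree := hemin f' (List.mem_of_mem_erase hf'mem) hf'0
          omega
    have hcover : J.minimalPrimes ⊆ {Q | Q ∈ J.minimalPrimes ∧ C b ∈ Q} ∪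
        {Q | Q ∈ J.minimalPrimes ∧ C b ∉ Q} := by
      intro Q hQ
      by_cases h : C b ∈ Q
      · exact Or.inl ⟨hQ, h⟩
      · exact Or.inr ⟨hQ, h⟩
    exact (hS1.union hS2).subset hcover

end Main

lemma fgfc_of_poly {R : Type*} [CommRing R] (hF : IsFGFC (Polynomial R)) : IsFGFC R := by
  intro I hfg
  have h1 : (I.map (C : R →+* R[X])).minimalPrimes.Finite := hF _ (Ideal.FG.map hfg _)
  have hsub : I.minimalPrimes ⊆
      Ideal.comap (C : R →+* R[X]) '' (I.map (C : R →+* R[X])).minimalPrimes := by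
    intro P hP
    haveI := hP.1.1
    refine ⟨P.map (C : R →+* R[X]), ⟨⟨(by haveI := hP.1.1; exact Ideal.isPrime_map_C_of_isPrime),
      Ideal.map_mono hP.1.2⟩, ?_⟩, comap_C_map P⟩
    rintro Q ⟨hQP, hQI⟩ hQle
    have h2 : I ≤ Q.comap C := le_trans Ideal.le_comap_map (Ideal.comap_mono hQI)
    have h3 : Q.comap (C : R →+* R[X]) ≤ P := by
      rw [← comap_C_map P]; exact Ideal.comap_mono hQle
    have h4 : P ≤ Q.comap C := hP.2 ⟨Ideal.IsPrime.comap _, h2⟩ h3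
    calc P.map (C : R →+* R[X]) ≤ (Q.comap C).map C := Ideal.map_mono h4
      _ ≤ Q := Ideal.map_comap_le
  exact (h1.image _).subset hsub

theorem stmt_6 (R : Type*) [CommRing R] :
    IsFGFC R ↔ IsFGFC (Polynomial R) := by
  constructor
  · intro hF J hJfg
    obtain ⟨s, hs⟩ := hJfg
    have h2 := key ((s.toList.map Polynomial.natDegree).sum) R hF s.toList le_rfl
    have hset : {f | f ∈ s.toList} = (↑s : Set R[X]) := by
      ext f; simp [Finset.mem_toList]
    rw [hset, hs] at h2
    exact h2
  · exact fgfc_of_poly
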